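/- Let H be an N×N real symmetric tridiagonal matrix with N ≥ 2 whose eigenvalues λ_1 < λ_2 < ⋯ < λ_N are pairwise distinct. For each i set M_i = λ_i I_N − H. Then for every i ∈ {1, …, N}: ∏_{j ≠ i} (λ_i − λ_j)² = ∑_{k=1}^N det((M_i)_{k|k})² + 2 ∑_{k=1}^{N−1} det((M_i)_{k|k+1})² + 2 ∑_{1 ≤ k < ℓ ≤ N, ℓ−k > 1} det((M_i)_{k|k}) · det((M_i)_{ℓ|ℓ}). -/

import Mathlib

open Matrix Polynomial Finset

lemma myDerivFinsetProd {R : Type*} [CommRing R] {ι : Type*} [DecidableEq ι]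
    (s : Finset ι) (f : ι → R[X]) :
    derivative (∏ j ∈ s, f j) = ∑ j ∈ s, (∏ k ∈ s.erase j, f k) * derivative (f j) := by
  classical
  induction s using Finset.induction_on with
  | empty => simp
  | @insert a s ha ih =>
    rw [Finset.prod_insert ha, derivative_mul, Finset.sum_insert ha, Finset.erase_insert ha, ih]
    congr 1
    · exact mul_comm _ _
    · rw [Finset.mul_sum]
      refine Finset.sum_congr rfl fun j hj => ?_
      have hja : a ∉ s.erase j := fun h => ha (Finset.mem_of_mem_erase h)
      rw [Finset.erase_insert_of_ne (by rintro rfl; exact ha hj), Finset.prod_insert hja]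
      ring

lemma myDerivDet {m : ℕ} {R : Type*} [CommRing R] (A : Matrix (Fin m) (Fin m) R[X]) :
    derivative A.det
      = ∑ k, (A.updateCol k fun j => derivative (A j k)).det := by
  rw [Matrix.det_apply', map_sum]
  have h : ∀ σ : Equiv.Perm (Fin m),
      derivative (((Equiv.Perm.sign σ : ℤ) : R[X]) * ∏ j, A (σ j) j)
        = ∑ k, ((Equiv.Perm.sign σ : ℤ) : R[X])
            * ((∏ j ∈ Finset.univ.erase k, A (σ j) j) * derivative (A (σ k) k)) := by
    intro σ
    rw [derivative_mul, derivative_intCast, zero_mul, zero_add, myDerivFinsetProd, Finset.mul_sum]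
  simp_rw [h]
  rw [Finset.sum_comm]
  refine Finset.sum_congr rfl fun k _ => ?_
  rw [Matrix.det_apply']
  refine Finset.sum_congr rfl fun σ _ => ?_
  congr 1
  rw [← Finset.mul_prod_erase Finset.univ _ (Finset.mem_univ k)]
  rw [Matrix.updateCol_self]
  rw [mul_comm]
  congr 1
  refine Finset.prod_congr rfl fun j hj => ?_
  exact (Matrix.updateCol_ne (Finset.mem_erase.mp hj).1).symm

lemma mySumSqSplit {m : ℕ} (d : Fin (m + 2) → ℝ) :
    (∑ k, d k) ^ 2
      = ∑ k, d k ^ 2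
        + 2 * ∑ k : Fin (m + 1), d k.castSucc * d k.succ
        + 2 * ∑ p ∈ Finset.univ.filter
              (fun p : Fin (m + 2) × Fin (m + 2) => (p.1 : ℕ) + 1 < (p.2 : ℕ)),
            d p.1 * d p.2 := by
  classical
  set f : Fin (m+2) × Fin (m+2) → ℝ := fun p => d p.1 * d p.2 with hf
  have hS : (∑ k, d k) ^ 2 = ∑ p : Fin (m+2) × Fin (m+2), f p := by
    rw [sq, Finset.sum_mul_sum]
    rw [← Finset.univ_product_univ, Finset.sum_product]
  have hdiag : ∑ p ∈ (Finset.univ.filter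
        (fun p : Fin (m+2) × Fin (m+2) => ¬ (p.1 : ℕ) < (p.2 : ℕ))).filter
        (fun p => ¬ (p.2 : ℕ) < (p.1 : ℕ)), f p = ∑ k, d k ^ 2 := by
    refine Finset.sum_nbij' (fun p => p.1) (fun k => (k, k)) ?_ ?_ ?_ ?_ ?_
    · intro a _; exact Finset.mem_univ _
    · intro a _
      simp only [Finset.mem_filter, Finset.mem_univ, true_and]
      omega
    · intro a ha
      simp only [Finset.mem_filter, Finset.mem_univ, true_and] at ha
      have h2 : a.1 = a.2 := Fin.ext (by omega)
      exact Prod.ext rfl h2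
    · intro a _; rfl
    · intro a ha
      simp only [Finset.mem_filter, Finset.mem_univ, true_and] at ha
      have h2 : a.1 = a.2 := Fin.ext (by omega)
      simp [hf, ← h2, sq]
  have hswap : ∑ p ∈ (Finset.univ.filter
        (fun p : Fin (m+2) × Fin (m+2) => ¬ (p.1 : ℕ) < (p.2 : ℕ))).filter
        (fun p => (p.2 : ℕ) < (p.1 : ℕ)), f p
      = ∑ p ∈ Finset.univ.filter
        (fun p : Fin (m+2) × Fin (m+2) => (p.1 : ℕ) < (p.2 : ℕ)), f p := by
    refine Finset.sum_nbij' Prod.swap Prod.swap ?_ ?_ ?_ ?_ ?_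
    · intro a ha
      simp only [Finset.mem_filter, Finset.mem_univ, true_and, Prod.fst_swap,
        Prod.snd_swap] at ha ⊢
      exact ha.2
    · intro a ha
      simp only [Finset.mem_filter, Finset.mem_univ, true_and, Prod.fst_swap,
        Prod.snd_swap] at ha ⊢
      omega
    · intro a _; exact Prod.swap_swap a
    · intro a _; exact Prod.swap_swap a
    · intro a _; simp [hf, mul_comm]
  have hdist : ∑ p ∈ (Finset.univ.filter
        (fun p : Fin (m+2) × Fin (m+2) => (p.1 : ℕ) < (p.2 : ℕ))).filter
        (fun p => (p.1 : ℕ) + 1 < (p.2 : ℕ)), f p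
      = ∑ p ∈ Finset.univ.filter
        (fun p : Fin (m+2) × Fin (m+2) => (p.1 : ℕ) + 1 < (p.2 : ℕ)), f p := by
    refine Finset.sum_congr ?_ (fun _ _ => rfl)
    rw [Finset.filter_filter]
    apply Finset.filter_congr
    intro p _
    constructor
    · rintro ⟨-, h⟩; exact h
    · intro h; exact ⟨by omega, h⟩
  have hadj : ∑ p ∈ (Finset.univ.filter
        (fun p : Fin (m+2) × Fin (m+2) => (p.1 : ℕ) < (p.2 : ℕ))).filter
        (fun p => ¬ (p.1 : ℕ) + 1 < (p.2 : ℕ)), f p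
      = ∑ k : Fin (m + 1), d k.castSucc * d k.succ := by
    refine Finset.sum_nbij' (fun p => (⟨min (p.1 : ℕ) m, by omega⟩ : Fin (m+1)))
      (fun k => (k.castSucc, k.succ)) ?_ ?_ ?_ ?_ ?_
    · intro a _; exact Finset.mem_univ _
    · intro k _
      simp only [Finset.mem_filter, Finset.mem_univ, true_and, Fin.coe_castSucc, Fin.val_succ]
      omega
    · intro a ha
      simp only [Finset.mem_filter, Finset.mem_univ, true_and] at ha
      have h2 : (a.2 : ℕ) = (a.1 : ℕ) + 1 := by omega
      have hlt2 := a.2.isLt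
      refine Prod.ext (Fin.ext ?_) (Fin.ext ?_) <;> simp <;> omega
    · intro k _
      apply Fin.ext
      have := k.isLt
      simp
      omega
    · intro a ha
      simp only [Finset.mem_filter, Finset.mem_univ, true_and] at ha
      have h2 : (a.2 : ℕ) = (a.1 : ℕ) + 1 := by omega
      have hlt2 := a.2.isLt
      have e1 : ((⟨min (a.1 : ℕ) m, by omega⟩ : Fin (m+1))).castSucc = a.1 :=
        Fin.ext (by simp; omega)
      have e2 : ((⟨min (a.1 : ℕ) m, by omega⟩ : Fin (m+1))).succ = a.2 :=
        Fin.ext (by simp; omega)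
      simp only [hf]
      rw [e1, e2]
  have hlt : ∑ p ∈ Finset.univ.filter
        (fun p : Fin (m+2) × Fin (m+2) => (p.1 : ℕ) < (p.2 : ℕ)), f p
      = ∑ p ∈ Finset.univ.filter
          (fun p : Fin (m+2) × Fin (m+2) => (p.1 : ℕ) + 1 < (p.2 : ℕ)), f p
        + ∑ k : Fin (m + 1), d k.castSucc * d k.succ := by
    rw [← Finset.sum_filter_add_sum_filter_not (Finset.univ.filter
      (fun p : Fin (m+2) × Fin (m+2) => (p.1 : ℕ) < (p.2 : ℕ)))
      (fun p : Fin (m+2) × Fin (m+2) => (p.1 : ℕ) + 1 < (p.2 : ℕ)) f, hdist, hadj]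
  rw [hS,
    ← Finset.sum_filter_add_sum_filter_not Finset.univ
      (fun p : Fin (m+2) × Fin (m+2) => (p.1 : ℕ) < (p.2 : ℕ)) f,
    ← Finset.sum_filter_add_sum_filter_not (Finset.univ.filter
      (fun p : Fin (m+2) × Fin (m+2) => ¬ (p.1 : ℕ) < (p.2 : ℕ)))
      (fun p : Fin (m+2) × Fin (m+2) => (p.2 : ℕ) < (p.1 : ℕ)) f,
    hdiag, hswap, hlt]
  ring


lemma myKernelProp {m : ℕ} (B : Matrix (Fin (m + 1)) (Fin (m + 1)) ℝ) (p : Fin (m + 1))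
    (hdet : (B.submatrix p.succAbove p.succAbove).det ≠ 0)
    {x y : Fin (m + 1) → ℝ} (hx : B *ᵥ x = 0) (hy : B *ᵥ y = 0) :
    x p • y = y p • x := by
  set z : Fin (m + 1) → ℝ := x p • y - y p • x with hzdef
  have hz : B *ᵥ z = 0 := by
    rw [hzdef, Matrix.mulVec_sub, Matrix.mulVec_smul, Matrix.mulVec_smul, hx, hy]
    simp
  have hzp : z p = 0 := by simp [hzdef]; ring
  have hz2 : (B.submatrix p.succAbove p.succAbove) *ᵥ (z ∘ p.succAbove) = 0 := by
    funext r
    have h0 := congrFun hz (p.succAbove r)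
    simp only [Matrix.mulVec, dotProduct, Pi.zero_apply] at h0 ⊢
    rw [Fin.sum_univ_succAbove (fun j => B (p.succAbove r) j * z j) p] at h0
    rw [hzp, mul_zero, zero_add] at h0
    simpa [Matrix.submatrix_apply, Function.comp] using h0
  have hinj : Function.Injective ((B.submatrix p.succAbove p.succAbove).mulVec) :=
    Matrix.mulVec_injective_iff_isUnit.mpr
      ((Matrix.isUnit_iff_isUnit_det _).mpr (isUnit_iff_ne_zero.mpr hdet))
  have hz3 : z ∘ p.succAbove = 0 := by
    apply hinj
    rw [hz2, Matrix.mulVec_zero]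
  have hzall : z = 0 := by
    funext j
    rcases eq_or_ne j p with rfl | hne
    · exact hzp
    · obtain ⟨r, hr⟩ := Fin.exists_succAbove_eq hne
      rw [← hr]
      exact congrFun hz3 r
  have := sub_eq_zero.mp (hzdef ▸ hzall)
  exact this

set_option maxHeartbeats 1000000 in
/-- Let `H` be an `N×N` real symmetric tridiagonal matrix (`N ≥ 2`)
with pairwise distinct eigenvalues `λ_1 < ⋯ < λ_N`, and set `M_i = λ_i I − H`.  Then
for every `i`:
`∏_{j≠i} (λ_i − λ_j)² = ∑_k det((M_i)_{k|k})² + 2 ∑_{k=1}^{N−1} det((M_i)_{k|k+1})²`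
`+ 2 ∑_{ℓ−k>1} det((M_i)_{k|k}) · det((M_i)_{ℓ|ℓ})`. -/
theorem tridiagonal_eigen_minor_identity {n : ℕ}
    (H : Matrix (Fin (n + 2)) (Fin (n + 2)) ℝ)
    (hsymm : H.IsSymm)
    (htri : ∀ i j : Fin (n + 2), (i : ℕ) + 1 < (j : ℕ) → H i j = 0)
    (lam : Fin (n + 2) → ℝ) (hmono : StrictMono lam)
    (hchar : H.charpoly = ∏ j, (Polynomial.X - Polynomial.C (lam j)))
    (M : Fin (n + 2) → Matrix (Fin (n + 2)) (Fin (n + 2)) ℝ)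
    (hM : ∀ i, M i = lam i • (1 : Matrix (Fin (n + 2)) (Fin (n + 2)) ℝ) - H)
    (i : Fin (n + 2)) :
    ∏ j ∈ Finset.univ.erase i, (lam i - lam j) ^ 2
      = ∑ k : Fin (n + 2), ((M i).submatrix k.succAbove k.succAbove).det ^ 2
        + 2 * ∑ k : Fin (n + 1),
            ((M i).submatrix (k.castSucc).succAbove (k.succ).succAbove).det ^ 2
        + 2 * ∑ p ∈ Finset.univ.filter
              (fun p : Fin (n + 2) × Fin (n + 2) => (p.1 : ℕ) + 1 < (p.2 : ℕ)),
            ((M i).submatrix p.1.succAbove p.1.succAbove).det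
              * ((M i).submatrix p.2.succAbove p.2.succAbove).det := by
  classical
  set x := lam i with hx
  set A := adjugate (M i) with hA
  have hMisymm : (M i)ᵀ = M i := by
    rw [hM i, Matrix.transpose_sub, Matrix.transpose_smul, Matrix.transpose_one, hsymm.eq]
  have hmap : (charmatrix H).map (Polynomial.eval x) = M i := by
    ext a b
    by_cases hab : a = b
    · subst hab
      rw [Matrix.map_apply, charmatrix_apply_eq, hM i]
      simp [Matrix.sub_apply, Matrix.smul_apply, Matrix.one_apply, hx]
    · rw [Matrix.map_apply, charmatrix_apply_ne _ _ _ hab, hM i]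
      simp [Matrix.sub_apply, Matrix.smul_apply, Matrix.one_apply_ne hab]
  have hdet0 : (M i).det = 0 := by
    have h1 : (M i).det = Polynomial.eval x H.charpoly := by
      rw [Matrix.charpoly, ← hmap]
      exact (RingHom.map_det (Polynomial.evalRingHom x) H.charmatrix).symm
    rw [h1, hchar, Polynomial.eval_prod]
    refine Finset.prod_eq_zero (Finset.mem_univ i) ?_
    simp [hx]
  -- diagonal adjugate entries = principal minors
  have hAdiag : ∀ k : Fin (n + 2), A k k = ((M i).submatrix k.succAbove k.succAbove).det := by
    intro k
    rw [hA, Matrix.adjugate_fin_succ_eq_det_submatrix, ← two_mul, pow_mul, neg_one_sq, one_pow,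
      one_mul]
  -- symmetry of adjugate
  have hAsymm : ∀ k l, A k l = A l k := by
    intro k l
    have h1 : Aᵀ = A := by rw [hA, Matrix.adjugate_transpose, hMisymm]
    conv_lhs => rw [← h1]
    rfl
  -- trace identity
  have htr : ∑ k, A k k = ∏ j ∈ Finset.univ.erase i, (x - lam j) := by
    have h1 : Polynomial.eval x (Polynomial.derivative H.charpoly)
        = ∏ j ∈ Finset.univ.erase i, (x - lam j) := by
      rw [hchar, show (∏ j, (Polynomial.X - Polynomial.C (lam j)) : Polynomial ℝ)
          = Lagrange.nodal Finset.univ lam from (Lagrange.nodal_eq _ _).symm,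
        Lagrange.eval_nodal_derivative_eval_node_eq (Finset.mem_univ i),
        Lagrange.eval_nodal]
    have h2 : Polynomial.eval x (Polynomial.derivative H.charpoly) = ∑ k, A k k := by
      rw [Matrix.charpoly, myDerivDet, Polynomial.eval_finset_sum]
      refine Finset.sum_congr rfl fun k _ => ?_
      have hupdate : (((charmatrix H).updateCol k
            fun j => Polynomial.derivative (charmatrix H j k)).map (Polynomial.eval x))
          = (M i).updateCol k (Pi.single k 1) := by
        ext a b
        by_cases hbk : b = k
        · subst hbk
          rw [Matrix.map_apply, Matrix.updateCol_self, Matrix.updateCol_self]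
          by_cases hak : a = b
          · subst hak
            rw [charmatrix_apply_eq]
            simp
          · rw [charmatrix_apply_ne _ _ _ hak]
            simp [Pi.single_eq_of_ne hak]
        · rw [Matrix.map_apply, Matrix.updateCol_ne hbk, Matrix.updateCol_ne hbk, ← hmap,
            Matrix.map_apply]
      have hrowcol : (M i).updateCol k (Pi.single k 1)
          = ((M i).updateRow k (Pi.single k 1))ᵀ := by
        conv_lhs => rw [← hMisymm]
        exact Matrix.updateCol_transpose
      calc Polynomial.eval x
            ((charmatrix H).updateCol k fun j => Polynomial.derivative (charmatrix H j k)).det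
          = ((M i).updateCol k (Pi.single k 1)).det := by
            rw [← hupdate]
            exact RingHom.map_det (Polynomial.evalRingHom x) _
        _ = ((M i).updateRow k (Pi.single k 1)).det := by
            rw [hrowcol, Matrix.det_transpose]
        _ = A k k := (Matrix.adjugate_apply _ _ _).symm
    rw [← h1, h2]
  have hcne : (∏ j ∈ Finset.univ.erase i, (x - lam j)) ≠ 0 := by
    refine Finset.prod_ne_zero_iff.mpr fun j hj => ?_
    have hji : j ≠ i := (Finset.mem_erase.mp hj).1
    exact sub_ne_zero.mpr (fun h => hji (hmono.injective h.symm))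
  -- a nonzero diagonal entry of A
  obtain ⟨p, -, hp⟩ : ∃ p ∈ Finset.univ, A p p ≠ 0 := by
    apply Finset.exists_ne_zero_of_sum_ne_zero
    rw [htr]; exact hcne
  -- columns of A are in the kernel of M i
  have hker : ∀ l, (M i) *ᵥ (fun j => A j l) = 0 := by
    intro l
    have hMA : (M i) * A = 0 := by rw [hA, Matrix.mul_adjugate, hdet0, zero_smul]
    funext r
    have h0 : ((M i) * A) r l = 0 := by rw [hMA]; rfl
    rw [Matrix.mul_apply] at h0
    simpa [Matrix.mulVec, dotProduct] using h0
  have hminor : ((M i).submatrix p.succAbove p.succAbove).det ≠ 0 := by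
    rw [← hAdiag p]; exact hp
  -- the proportionality relation
  have hprop : ∀ c d j : Fin (n + 2), A p c * A j d = A p d * A j c := by
    intro c d j
    have h0 := myKernelProp (M i) p hminor (hker c) (hker d)
    have h1 := congrFun h0 j
    simpa [smul_eq_mul] using h1
  -- key 2x2 identity
  have hG : ∀ k l, A k l * A l k = A k k * A l l := by
    intro k l
    by_cases hpk : A p k = 0
    · have hcol : ∀ j, A j k = 0 := by
        intro j
        have h1 := hprop k p j
        rw [hpk, zero_mul] at h1
        rcases mul_eq_zero.mp h1.symm with h | h
        · exact absurd h hp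
        · exact h
      rw [hcol l, hcol k, mul_zero, zero_mul]
    · have e1 := hprop k l k
      have e2 := hprop k l l
      refine mul_left_cancel₀ hpk ?_
      calc A p k * (A k l * A l k) = (A p k * A k l) * A l k := by ring
        _ = (A p l * A k k) * A l k := by rw [e1]
        _ = A k k * (A p l * A l k) := by ring
        _ = A k k * (A p k * A l l) := by rw [← e2]
        _ = A p k * (A k k * A l l) := by ring
  -- middle minors
  have hmid : ∀ k : Fin (n + 1),
      ((M i).submatrix (k.castSucc).succAbove (k.succ).succAbove).det ^ 2
        = A k.castSucc k.castSucc * A k.succ k.succ := by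
    intro k
    have he := Matrix.adjugate_fin_succ_eq_det_submatrix (M i) k.succ k.castSucc
    rw [← hA] at he
    have hsq : (A k.succ k.castSucc) ^ 2
        = ((M i).submatrix (k.castSucc).succAbove (k.succ).succAbove).det ^ 2 := by
      rw [he, mul_pow, ← pow_mul, mul_comm ((k.castSucc : ℕ) + (k.succ : ℕ)) 2, pow_mul,
        neg_one_sq, one_pow, one_mul]
    rw [← hsq, sq]
    nth_rewrite 1 [hAsymm k.succ k.castSucc]
    exact hG k.castSucc k.succ
  -- final assembly
  have hLHS : ∏ j ∈ Finset.univ.erase i, (x - lam j) ^ 2 = (∑ k, A k k) ^ 2 := by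
    rw [htr, Finset.prod_pow]
  rw [hLHS, mySumSqSplit (fun k => A k k)]
  congr 1
  · congr 1
    · exact Finset.sum_congr rfl fun k _ => by rw [hAdiag k]
    · congr 1
      exact Finset.sum_congr rfl fun k _ => (hmid k).symm
  · congr 1
    exact Finset.sum_congr rfl fun pp _ => by rw [hAdiag pp.1, hAdiag pp.2]
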